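/- Assume hᵢ > 0 for all i ∈ {1,…,n}, 0 < γᵢ < 1 for all i ∈ {1,…,n−1}, and let u ∈ ℝⁿ, u₀ ∈ ℝ. If α_{n,i}·|uᵢ − u₀| < λ_min(S⁰_x(h,γ)) for every i ∈ {1,…,n}, then the symmetric 3n×3n matrix S_x(w,γ,u₀) is positive definite (where w is any state vector with height coordinates h and x-velocity coordinates u). -/

import Mathlib

open Matrix

namespace MLSW7

noncomputable def alpha (n : ℕ) (ρ : Fin n → ℝ) (i k : Fin n) : ℝ :=
  if k < i then ρ k / ρ i else 1

noncomputable def Gam (n : ℕ) (ρ : Fin n → ℝ) : Matrix (Fin n) (Fin n) ℝ :=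
  Matrix.of (alpha n ρ)

/-- `α_{n,i}`. -/
noncomputable def alphaN (n : ℕ) (ρ : Fin n → ℝ) (i : Fin n) : ℝ :=
  if h : n - 1 < n then alpha n ρ ⟨n - 1, h⟩ i else 1

noncomputable def Delta (n : ℕ) (ρ : Fin n → ℝ) : Matrix (Fin n) (Fin n) ℝ :=
  Matrix.diagonal (alphaN n ρ)

/-- The density ratio `γᵢ = ρᵢ/ρᵢ₊₁`. -/
noncomputable def gam (n : ℕ) (ρ : Fin n → ℝ) (i : Fin (n - 1)) : ℝ :=
  ρ ⟨i.val, by have := i.isLt; omega⟩ / ρ ⟨i.val + 1, by have := i.isLt; omega⟩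

/-- A 3×3 block matrix with n×n blocks, rows `[[A,B,C],[D,E,F],[G,H,K]]`. -/
def blk3 {n : ℕ} (A B C D E F G H K : Matrix (Fin n) (Fin n) ℝ) :
    Matrix (Fin n ⊕ Fin n ⊕ Fin n) (Fin n ⊕ Fin n ⊕ Fin n) ℝ :=
  Matrix.fromBlocks A (Matrix.fromCols B C) (Matrix.fromRows D G)
    (Matrix.fromBlocks E F H K)

/-- `S⁰_x(h,γ) = diag(ΔΓ, ΔH, ΔH)`. -/
noncomputable def S0 (n : ℕ) (ρ : Fin n → ℝ) (h : Fin n → ℝ) :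
    Matrix (Fin n ⊕ Fin n ⊕ Fin n) (Fin n ⊕ Fin n ⊕ Fin n) ℝ :=
  blk3 (Delta n ρ * Gam n ρ) 0 0
    0 (Delta n ρ * Matrix.diagonal h) 0
    0 0 (Delta n ρ * Matrix.diagonal h)

/-- The symmetrizer candidate `S_x(w,γ,u₀)`; it depends only on the height
coordinates `h` and x-velocity coordinates `u` of the state vector `w`. -/
noncomputable def Sx (n : ℕ) (ρ : Fin n → ℝ) (h u : Fin n → ℝ) (u₀ : ℝ) :
    Matrix (Fin n ⊕ Fin n ⊕ Fin n) (Fin n ⊕ Fin n ⊕ Fin n) ℝ :=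
  blk3 (Delta n ρ * Gam n ρ) (Delta n ρ * (Matrix.diagonal u - u₀ • 1)) 0
    (Delta n ρ * (Matrix.diagonal u - u₀ • 1)) (Delta n ρ * Matrix.diagonal h) 0
    0 0 (Delta n ρ * Matrix.diagonal h)

/-- Smallest eigenvalue: infimum of the Rayleigh quotient over the unit sphere. -/
noncomputable def lamMin {m : Type*} [Fintype m] (M : Matrix m m ℝ) : ℝ :=
  ⨅ x : {x : m → ℝ // x ⬝ᵥ x = 1}, x.1 ⬝ᵥ M.mulVec x.1

/- ### Auxiliary lemmas -/

lemma bddBelow_rayleigh {m : Type*} [Fintype m] (M : Matrix m m ℝ) :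
    BddBelow (Set.range fun x : {x : m → ℝ // x ⬝ᵥ x = 1} => x.1 ⬝ᵥ M.mulVec x.1) := by
  have hcont : Continuous fun x : m → ℝ => x ⬝ᵥ M.mulVec x := by
    simp only [dotProduct, mulVec]
    fun_prop
  have hS : IsCompact {x : m → ℝ | x ⬝ᵥ x = 1} := by
    have hsub : {x : m → ℝ | x ⬝ᵥ x = 1} ⊆ Metric.closedBall 0 1 := by
      intro x hx
      simp only [Set.mem_setOf_eq, dotProduct] at hx
      simp only [Metric.mem_closedBall, dist_zero_right]
      rw [pi_norm_le_iff_of_nonneg zero_le_one]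
      intro i
      rw [Real.norm_eq_abs, abs_le_one_iff_mul_self_le_one, ← hx]
      exact Finset.single_le_sum (fun j _ => mul_self_nonneg (x j)) (Finset.mem_univ i)
    refine (isCompact_closedBall 0 1).of_isClosed_subset ?_ hsub
    exact isClosed_eq (by simp only [dotProduct]; fun_prop) continuous_const
  have hr : (Set.range fun x : {x : m → ℝ // x ⬝ᵥ x = 1} => x.1 ⬝ᵥ M.mulVec x.1)
      = (fun x : m → ℝ => x ⬝ᵥ M.mulVec x) '' {x : m → ℝ | x ⬝ᵥ x = 1} := by
    rw [Set.image_eq_range]; rfl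
  rw [hr]
  exact (hS.image hcont).bddBelow

lemma dotProduct_self_pos' {m : Type*} [Fintype m] {v : m → ℝ} (hv : v ≠ 0) : 0 < v ⬝ᵥ v := by
  have h0 : 0 ≤ v ⬝ᵥ v := Finset.sum_nonneg fun i _ => mul_self_nonneg (v i)
  rcases h0.lt_or_eq with hlt | heq
  · exact hlt
  · exfalso
    apply hv
    funext i
    by_contra hvi
    have hp : 0 < v ⬝ᵥ v :=
      Finset.sum_pos' (fun j _ => mul_self_nonneg (v j))
        ⟨i, Finset.mem_univ i, mul_self_pos.mpr hvi⟩
    linarith [heq.symm ▸ hp]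

lemma lamMin_mul_le {m : Type*} [Fintype m] (M : Matrix m m ℝ) (v : m → ℝ) :
    lamMin M * (v ⬝ᵥ v) ≤ v ⬝ᵥ M.mulVec v := by
  rcases eq_or_ne v 0 with rfl | hv
  · simp
  · have hs : 0 < v ⬝ᵥ v := dotProduct_self_pos' hv
    set s := v ⬝ᵥ v with hsdef
    set t : ℝ := (Real.sqrt s)⁻¹ with ht
    have htt : t * t = s⁻¹ := by
      rw [ht, ← mul_inv, Real.mul_self_sqrt hs.le]
    have hw : (t • v) ⬝ᵥ (t • v) = 1 := by
      rw [smul_dotProduct, dotProduct_smul, smul_eq_mul, smul_eq_mul, ← mul_assoc, htt]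
      exact inv_mul_cancel₀ hs.ne'
    have hle : lamMin M ≤ (t • v) ⬝ᵥ M.mulVec (t • v) :=
      ciInf_le (bddBelow_rayleigh M) (⟨t • v, hw⟩ : {x : m → ℝ // x ⬝ᵥ x = 1})
    have hq : (t • v) ⬝ᵥ M.mulVec (t • v) = s⁻¹ * (v ⬝ᵥ M.mulVec v) := by
      rw [M.mulVec_smul, smul_dotProduct, dotProduct_smul, smul_eq_mul, smul_eq_mul,
        ← mul_assoc, htt]
    rw [hq] at hle
    calc lamMin M * s ≤ (s⁻¹ * (v ⬝ᵥ M.mulVec v)) * s :=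
          mul_le_mul_of_nonneg_right hle hs.le
      _ = v ⬝ᵥ M.mulVec v := by field_simp

lemma alphaN_pos (n : ℕ) (hn : 2 ≤ n) (ρ : Fin n → ℝ) (hρ : ∀ i, 0 < ρ i) (i : Fin n) :
    0 < alphaN n ρ i := by
  have hlt : n - 1 < n := by omega
  rw [alphaN, dif_pos hlt, alpha]
  split
  · exact div_pos (hρ _) (hρ _)
  · exact one_pos

lemma alphaN_alpha_symm (n : ℕ) (hn : 2 ≤ n) (ρ : Fin n → ℝ) (hρ : ∀ i, 0 < ρ i)
    (i k : Fin n) :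
    alphaN n ρ i * alpha n ρ i k = alphaN n ρ k * alpha n ρ k i := by
  have hlt : n - 1 < n := by omega
  have key : ∀ a b : Fin n, b < a →
      alphaN n ρ a * alpha n ρ a b = ρ b / ρ ⟨n - 1, hlt⟩ := by
    intro a b hba
    have hab : alpha n ρ a b = ρ b / ρ a := if_pos hba
    rw [alphaN, dif_pos hlt, hab, alpha]
    split
    · rename_i hcase
      have ha : ρ a ≠ 0 := (hρ a).ne'
      field_simp
    · rename_i hcase
      have h1 := a.isLt
      have h2 : ¬ (a : ℕ) < n - 1 := by simpa [Fin.lt_def] using hcase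
      have : a = ⟨n - 1, hlt⟩ := Fin.ext (show (a : ℕ) = n - 1 by omega)
      rw [this, one_mul]
  have key2 : ∀ a b : Fin n, b < a →
      alphaN n ρ b * alpha n ρ b a = ρ b / ρ ⟨n - 1, hlt⟩ := by
    intro a b hba
    have hna : alpha n ρ b a = 1 := if_neg (by exact not_lt.mpr hba.le)
    have hb : b < (⟨n - 1, hlt⟩ : Fin n) := by
      have h1 := a.isLt
      have h2 : (b : ℕ) < (a : ℕ) := Fin.lt_def.mp hba
      rw [Fin.lt_def]
      show (b : ℕ) < n - 1
      omega
    rw [hna, mul_one, alphaN, dif_pos hlt, alpha, if_pos hb]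
  rcases lt_trichotomy i k with hik | hik | hik
  · rw [key2 k i hik, key k i hik]
  · rw [hik]
  · rw [key i k hik, key2 i k hik]

lemma hSplit (n : ℕ) (ρ : Fin n → ℝ) (h u : Fin n → ℝ) (u₀ : ℝ) :
    Sx n ρ h u u₀ = S0 n ρ h +
      blk3 0 (Matrix.diagonal fun i => alphaN n ρ i * (u i - u₀)) 0
        (Matrix.diagonal fun i => alphaN n ρ i * (u i - u₀)) 0 0 0 0 0 := by
  have hD : Delta n ρ * (Matrix.diagonal u - u₀ • (1 : Matrix (Fin n) (Fin n) ℝ))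
      = Matrix.diagonal fun i => alphaN n ρ i * (u i - u₀) := by
    have h1 : Matrix.diagonal u - u₀ • (1 : Matrix (Fin n) (Fin n) ℝ)
        = Matrix.diagonal fun i => u i - u₀ := by
      ext i j
      by_cases hij : i = j <;> simp [Matrix.diagonal, Matrix.one_apply, hij]
    rw [h1, Delta, Matrix.diagonal_mul_diagonal]
  ext p q
  rcases p with i | i | i <;> rcases q with j | j | j <;>
    simp [Sx, S0, blk3, hD, Matrix.fromBlocks, Matrix.fromCols, Matrix.fromRows_apply_inl, Matrix.fromRows_apply_inr,
      Matrix.add_apply]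

lemma quadE {n : ℕ} (v : Fin n ⊕ Fin n ⊕ Fin n → ℝ) (d : Fin n → ℝ) :
    v ⬝ᵥ (blk3 0 (Matrix.diagonal d) 0 (Matrix.diagonal d) 0 0 0 0 0).mulVec v
      = ∑ i, 2 * d i * v (Sum.inl i) * v (Sum.inr (Sum.inl i)) := by
  simp only [dotProduct, mulVec, blk3, Matrix.fromBlocks, Matrix.fromCols, Matrix.fromRows_apply_inl, Matrix.fromRows_apply_inr,
    Fintype.sum_sum_type, Matrix.of_apply, Sum.elim_inl, Sum.elim_inr,
    Matrix.zero_apply, zero_mul, Finset.sum_const_zero, add_zero, zero_add,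
    Matrix.diagonal_apply, ite_mul, Finset.sum_ite_eq, Finset.mem_univ, if_true]
  simp only [← Finset.sum_add_distrib]
  exact Finset.sum_congr rfl fun i _ => by ring

lemma quadvv {n : ℕ} (v : Fin n ⊕ Fin n ⊕ Fin n → ℝ) :
    v ⬝ᵥ v = ∑ i, v (Sum.inl i) * v (Sum.inl i)
      + ∑ i, v (Sum.inr (Sum.inl i)) * v (Sum.inr (Sum.inl i))
      + ∑ i, v (Sum.inr (Sum.inr i)) * v (Sum.inr (Sum.inr i)) := by
  simp [dotProduct, Fintype.sum_sum_type, add_assoc]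

lemma Sx_isHermitian (n : ℕ) (hn : 2 ≤ n) (ρ : Fin n → ℝ) (hρ : ∀ i, 0 < ρ i)
    (h u : Fin n → ℝ) (u₀ : ℝ) : (Sx n ρ h u u₀).IsHermitian := by
  have hDG : ∀ i j, (Delta n ρ * Gam n ρ) i j = alphaN n ρ i * alpha n ρ i j := by
    intro i j
    simp [Delta, Gam, Matrix.diagonal_mul]
  have hdsym : ∀ (d : Fin n → ℝ) (i j : Fin n),
      Matrix.diagonal d j i = Matrix.diagonal d i j := by
    intro d i j
    by_cases hij : i = j <;> simp [Matrix.diagonal, hij, Ne.symm, eq_comm]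
  show (Sx n ρ h u u₀)ᴴ = Sx n ρ h u u₀
  ext p q
  simp only [Matrix.conjTranspose_apply, star_trivial]
  have hD : Delta n ρ * (Matrix.diagonal u - u₀ • (1 : Matrix (Fin n) (Fin n) ℝ))
      = Matrix.diagonal fun i => alphaN n ρ i * (u i - u₀) := by
    have h1 : Matrix.diagonal u - u₀ • (1 : Matrix (Fin n) (Fin n) ℝ)
        = Matrix.diagonal fun i => u i - u₀ := by
      ext i j
      by_cases hij : i = j <;> simp [Matrix.diagonal, Matrix.one_apply, hij]
    rw [h1, Delta, Matrix.diagonal_mul_diagonal]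
  have hH : Delta n ρ * Matrix.diagonal h = Matrix.diagonal fun i => alphaN n ρ i * h i := by
    rw [Delta, Matrix.diagonal_mul_diagonal]
  rcases p with i | i | i <;> rcases q with j | j | j <;>
    simp [Sx, blk3, hD, hH, Matrix.fromBlocks, Matrix.fromCols, Matrix.fromRows_apply_inl, Matrix.fromRows_apply_inr,
      hDG, hdsym, alphaN_alpha_symm n hn ρ hρ]

/-- If `α_{n,i}|uᵢ − u₀| < λ_min(S⁰_x(h,γ))` for all `i`, then `S_x(w,γ,u₀)` is
positive definite. -/
theorem stmt7 (n : ℕ) (hn : 2 ≤ n) (ρ : Fin n → ℝ) (hρ : ∀ i, 0 < ρ i)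
    (h : Fin n → ℝ) (hh : ∀ i, 0 < h i)
    (hγ : ∀ i : Fin (n - 1), 0 < gam n ρ i ∧ gam n ρ i < 1)
    (u : Fin n → ℝ) (u₀ : ℝ)
    (hu : ∀ i, alphaN n ρ i * |u i - u₀| < lamMin (S0 n ρ h)) :
    (Sx n ρ h u u₀).PosDef := by
  set M := lamMin (S0 n ρ h) with hM
  set d : Fin n → ℝ := fun i => alphaN n ρ i * (u i - u₀) with hd
  have hdabs : ∀ i, |d i| < M := by
    intro i
    have := hu i
    rw [hd]
    calc |alphaN n ρ i * (u i - u₀)| = alphaN n ρ i * |u i - u₀| := by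
          rw [abs_mul, abs_of_pos (alphaN_pos n hn ρ hρ i)]
      _ < M := this
  have hi0 : Fin n := ⟨0, by omega⟩
  have hMpos : 0 < M := lt_of_le_of_lt (abs_nonneg (d hi0)) (hdabs hi0)
  refine Matrix.PosDef.of_dotProduct_mulVec_pos (Sx_isHermitian n hn ρ hρ h u u₀) ?_
  intro v hv
  simp only [star_trivial]
  rw [hSplit n ρ h u u₀, Matrix.add_mulVec, dotProduct_add, ← hd, quadE v d]
  have hS0 : M * (v ⬝ᵥ v) ≤ v ⬝ᵥ (S0 n ρ h).mulVec v := lamMin_mul_le (S0 n ρ h) v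
  set a : Fin n → ℝ := fun i => v (Sum.inl i) with ha
  set b : Fin n → ℝ := fun i => v (Sum.inr (Sum.inl i)) with hb
  set c : Fin n → ℝ := fun i => v (Sum.inr (Sum.inr i)) with hc
  have hvv : v ⬝ᵥ v = ∑ i, a i * a i + ∑ i, b i * b i + ∑ i, c i * c i := quadvv v
  have hkey : 0 < M * (v ⬝ᵥ v) + ∑ i, 2 * d i * a i * b i := by
    have hsum : M * (v ⬝ᵥ v) + ∑ i, 2 * d i * a i * b i
        = (∑ i, (M * (a i * a i) + M * (b i * b i) + 2 * d i * a i * b i))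
          + ∑ i, M * (c i * c i) := by
      rw [hvv]
      simp only [← Finset.sum_add_distrib, Finset.mul_sum, mul_add]
      exact Finset.sum_congr rfl fun i _ => by ring
    rw [hsum]
    have hterm : ∀ i : Fin n, 0 ≤ M * (a i * a i) + M * (b i * b i) + 2 * d i * a i * b i := by
      intro i
      nlinarith [sq_nonneg (a i + b i), sq_nonneg (a i - b i), abs_nonneg (d i),
        le_abs_self (d i), neg_abs_le (d i), hdabs i, mul_self_nonneg (a i),
        mul_self_nonneg (b i)]
    have htermc : ∀ i : Fin n, 0 ≤ M * (c i * c i) :=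
      fun i => mul_nonneg hMpos.le (mul_self_nonneg (c i))
    -- v ≠ 0 gives some nonzero coordinate
    have : ∃ p, v p ≠ 0 := by
      by_contra hcon
      push_neg at hcon
      exact hv (funext hcon)
    obtain ⟨p, hp⟩ := this
    rcases p with i | i | i
    · have h1 : 0 < ∑ i, (M * (a i * a i) + M * (b i * b i) + 2 * d i * a i * b i) := by
        refine Finset.sum_pos' (fun j _ => hterm j) ⟨i, Finset.mem_univ i, ?_⟩
        nlinarith [sq_nonneg (a i + b i), sq_nonneg (a i - b i),
          le_abs_self (d i), neg_abs_le (d i), hdabs i, mul_self_nonneg (b i),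
          mul_self_pos.mpr (show a i ≠ 0 from hp)]
      have h2 : 0 ≤ ∑ i, M * (c i * c i) := Finset.sum_nonneg fun j _ => htermc j
      linarith
    · have h1 : 0 < ∑ i, (M * (a i * a i) + M * (b i * b i) + 2 * d i * a i * b i) := by
        refine Finset.sum_pos' (fun j _ => hterm j) ⟨i, Finset.mem_univ i, ?_⟩
        nlinarith [sq_nonneg (a i + b i), sq_nonneg (a i - b i),
          le_abs_self (d i), neg_abs_le (d i), hdabs i, mul_self_nonneg (a i),
          mul_self_pos.mpr (show b i ≠ 0 from hp)]
      have h2 : 0 ≤ ∑ i, M * (c i * c i) := Finset.sum_nonneg fun j _ => htermc j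
      linarith
    · have h1 : 0 ≤ ∑ i, (M * (a i * a i) + M * (b i * b i) + 2 * d i * a i * b i) :=
        Finset.sum_nonneg fun j _ => hterm j
      have h2 : 0 < ∑ i, M * (c i * c i) := by
        refine Finset.sum_pos' (fun j _ => htermc j) ⟨i, Finset.mem_univ i, ?_⟩
        exact mul_pos hMpos (mul_self_pos.mpr hp)
      linarith
  linarith [hS0, hkey]

end MLSW7
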